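/- Let d ≥ 1, let 1 ≤ i ≤ d, and let s = (s_1,…,s_d) be a sequence of positive integers with s_1 = s_2 = ⋯ = s_i and s_j < s_{j+1} for all i ≤ j ≤ d−1. The topological interior of P_d^{(s)} contains exactly one lattice point if and only if s_1 = ⋯ = s_i = i+1 and s_{j+1} ≤ 2 s_j for all i ≤ j ≤ d−1. Moreover, in this case the unique interior lattice point is the point p ∈ ℤ^d with p_j = j for 1 ≤ j ≤ i and p_j = s_j − 1 for i < j ≤ d. -/

import Mathlib

open Pointwise BigOperators

/-- The `s`-lecture hall polytope
`P_d^(s) = {x ∈ ℝ^d : 0 ≤ x_1/s_1 ≤ x_2/s_2 ≤ ⋯ ≤ x_d/s_d ≤ 1}`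
(indices shifted down by one: `x i` is the paper's `x_{i+1}`). -/
def lectureHall (d : ℕ) (s : Fin d → ℕ) : Set (Fin d → ℝ) :=
  {x | (∀ h : 0 < d, 0 ≤ x ⟨0, h⟩ / (s ⟨0, h⟩ : ℝ)) ∧
       (∀ i : Fin d, ∀ hi : (i : ℕ) + 1 < d,
          x i / (s i : ℝ) ≤ x ⟨(i : ℕ) + 1, hi⟩ / (s ⟨(i : ℕ) + 1, hi⟩ : ℝ)) ∧
       (∀ h : 0 < d,
          x ⟨d - 1, Nat.sub_lt h Nat.one_pos⟩ / (s ⟨d - 1, Nat.sub_lt h Nat.one_pos⟩ : ℝ) ≤ 1)}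

/-- The set of lattice points of `ℝ^d`. -/
def latticePoints (d : ℕ) : Set (Fin d → ℝ) := {x | ∀ i, ∃ n : ℤ, x i = (n : ℝ)}

/-- The dual polytope `Q^∨ = {y : ⟨x,y⟩ ≤ 1 for all x ∈ Q}`. -/
def dualPolytope {d : ℕ} (Q : Set (Fin d → ℝ)) : Set (Fin d → ℝ) :=
  {y | ∀ x ∈ Q, ∑ i, x i * y i ≤ 1}

/-- A full-dimensional lattice polytope is reflexive if it is Fano (the only
lattice point of its interior is the origin) and its dual polytope is a lattice
polytope. -/
def IsReflexive {d : ℕ} (Q : Set (Fin d → ℝ)) : Prop :=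
  interior Q ∩ latticePoints d = {0} ∧
  dualPolytope Q = convexHull ℝ (dualPolytope Q ∩ latticePoints d)

/-- Unimodular equivalence: `Q = f_U(P) + w` with `U` an integer matrix of
determinant `±1` and `w` an integer vector. -/
def UnimodularlyEquivalent {d : ℕ} (P Q : Set (Fin d → ℝ)) : Prop :=
  ∃ (U : Matrix (Fin d) (Fin d) ℤ) (w : Fin d → ℤ),
    (U.det = 1 ∨ U.det = -1) ∧
    Q = (fun x => Matrix.vecMul x (U.map (fun a : ℤ => (a : ℝ))) + fun i => (w i : ℝ)) '' P

/-- `P` is Gorenstein of index `c`: `c` is the smallest positive integer such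
that `cP` is unimodularly equivalent to a reflexive polytope. -/
def GorensteinOfIndex {d : ℕ} (P : Set (Fin d → ℝ)) (c : ℕ) : Prop :=
  0 < c ∧
  (∃ Q : Set (Fin d → ℝ), UnimodularlyEquivalent ((c : ℝ) • P) Q ∧ IsReflexive Q) ∧
  ∀ c' : ℕ, 0 < c' →
    (∃ Q : Set (Fin d → ℝ), UnimodularlyEquivalent ((c' : ℝ) • P) Q ∧ IsReflexive Q) →
    c ≤ c'

/-- `P` is translation equivalent to a reflexive polytope. -/
def TranslationReflexive {d : ℕ} (P : Set (Fin d → ℝ)) : Prop :=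
  ∃ w : Fin d → ℤ, IsReflexive ((fun x => x + fun i => (w i : ℝ)) '' P)

/-- With the conventions `e_0 = 0`, `s_0 = 1`, every position `0,…,d-1` of the
`s`-inversion sequence `e` is an ascent (`e i` is the paper's `e_{i+1}`). -/
def allAscents (d : ℕ) (s : Fin d → ℕ) (e : Fin d → ℤ) : Prop :=
  (∀ h : 0 < d, (0 : ℝ) / 1 < (e ⟨0, h⟩ : ℝ) / (s ⟨0, h⟩ : ℝ)) ∧
  ∀ i : Fin d, ∀ hi : (i : ℕ) + 1 < d,
    (e i : ℝ) / (s i : ℝ) < (e ⟨(i : ℕ) + 1, hi⟩ : ℝ) / (s ⟨(i : ℕ) + 1, hi⟩ : ℝ)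

/-- The integer decomposition property. -/
def HasIDP (d : ℕ) (P : Set (Fin d → ℝ)) : Prop :=
  ∀ k : ℕ, 0 < k → ∀ z : Fin d → ℤ,
    (fun i => (z i : ℝ)) ∈ (k : ℝ) • P →
    ∃ x : Fin k → Fin d → ℤ,
      (∀ j, (fun i => (x j i : ℝ)) ∈ P) ∧ ∀ i, (∑ j, x j i) = z i


def chainN (d : ℕ) (S P : ℕ → ℤ) : Prop :=
  0 < P 0 ∧ (∀ k, k + 1 < d → S (k + 1) * P k < S k * P (k + 1)) ∧ P (d - 1) < S (d - 1)

def QN (i : ℕ) (S : ℕ → ℤ) : ℕ → ℤ := fun k => if k < i then (k : ℤ) + 1 else S k - 1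

lemma chainN_congr {d : ℕ} {S P P' : ℕ → ℤ} (hd : 0 < d)
    (h : ∀ k, k < d → P k = P' k) (hP : chainN d S P) : chainN d S P' := by
  obtain ⟨h0, hstep, hlast⟩ := hP
  refine ⟨?_, ?_, ?_⟩
  · rw [← h 0 hd]; exact h0
  · intro k hk
    rw [← h k (by omega), ← h (k + 1) hk]; exact hstep k hk
  · rw [← h (d - 1) (by omega)]; exact hlast

lemma upperN {d : ℕ} {S P : ℕ → ℤ} (hS : ∀ k, k < d → 0 < S k)
    (hP : chainN d S P) : ∀ k, k < d → P k ≤ S k - 1 := by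
  obtain ⟨h0, hstep, hlast⟩ := hP
  have key : ∀ m k, k < d → d - 1 - k = m → P k ≤ S k - 1 := by
    intro m
    induction m with
    | zero =>
      intro k hk hm
      have : k = d - 1 := by omega
      subst this; omega
    | succ m ih =>
      intro k hk hm
      have hk1 : k + 1 < d := by omega
      have h1 := ih (k + 1) hk1 (by omega)
      have h2 := hstep k hk1
      have h3 := hS k hk
      have h4 := hS (k + 1) hk1
      nlinarith [mul_le_mul_of_nonneg_left h1 h3.le]
  intro k hk; exact key (d - 1 - k) k hk rfl

lemma lowerBlockN {d i : ℕ} {S P : ℕ → ℤ} (hid : i ≤ d) (hS0 : 0 < S 0)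
    (hconst : ∀ k, k < i → S k = S 0) (hP : chainN d S P) :
    ∀ k, k < i → (k : ℤ) + 1 ≤ P k := by
  obtain ⟨h0, hstep, _⟩ := hP
  intro k
  induction k with
  | zero => intro _; push_cast; omega
  | succ k ih =>
    intro hk
    have hk' : k < i := by omega
    have h1 := ih hk'
    have hkd : k + 1 < d := by omega
    have h2 := hstep k hkd
    rw [hconst k hk', hconst (k + 1) hk] at h2
    have h3 : P k < P (k + 1) := lt_of_mul_lt_mul_left h2 hS0.le
    push_cast
    omega

section
variable {d i : ℕ} {S : ℕ → ℤ}

lemma QN_step (hd : 0 < d) (hi1 : 1 ≤ i) (hid : i ≤ d)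
    (hS : ∀ k, k < d → 0 < S k) (hconst : ∀ k, k < i → S k = S 0)
    (hinc : ∀ k, k + 1 < d → i ≤ k + 1 → S k < S (k + 1))
    (ha : (i : ℤ) + 1 ≤ S 0) :
    ∀ k, k + 1 < d → S (k + 1) * QN i S k < S k * QN i S (k + 1) := by
  intro k hk
  by_cases h1 : k + 1 < i
  · have hSk := hconst k (by omega)
    have hSk1 := hconst (k + 1) h1
    simp only [QN, if_pos (show k < i by omega), if_pos h1]
    rw [hSk, hSk1]
    push_cast
    nlinarith [lt_of_lt_of_le (show (0:ℤ) < (i:ℤ) + 1 by positivity) ha]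
  · by_cases h2 : k < i
    · -- k = i - 1, crossing step
      have hk1i : k + 1 = i := by omega
      simp only [QN, if_pos h2, if_neg h1]
      have hSk := hconst k h2
      have hstep := hinc k hk (by omega)
      have hS1 := hS (k + 1) hk
      rw [hSk]
      have hki : (k : ℤ) + 1 = (i : ℤ) := by exact_mod_cast congrArg (Nat.cast : ℕ → ℤ) hk1i
      rw [hki]
      -- goal : S (k+1) * i < S 0 * (S (k+1) - 1)
      have h5 : S 0 < S (k + 1) := by rw [← hSk]; exact hstep
      nlinarith [mul_nonneg (show (0:ℤ) ≤ S 0 - (i:ℤ) - 1 by linarith) (show (0:ℤ) ≤ S (k+1) - S 0 by linarith)]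
    · simp only [QN, if_neg h2, if_neg h1]
      have h5 := hinc k hk (by omega)
      have h3 := hS k (by omega)
      have h4 := hS (k + 1) hk
      nlinarith

lemma QN_chain (hd : 0 < d) (hi1 : 1 ≤ i) (hid : i ≤ d)
    (hS : ∀ k, k < d → 0 < S k) (hconst : ∀ k, k < i → S k = S 0)
    (hinc : ∀ k, k + 1 < d → i ≤ k + 1 → S k < S (k + 1))
    (ha : (i : ℤ) + 1 ≤ S 0) : chainN d S (QN i S) := by
  refine ⟨?_, QN_step hd hi1 hid hS hconst hinc ha, ?_⟩
  · simp only [QN, if_pos (show 0 < i from hi1)]; norm_num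
  · by_cases h : d - 1 < i
    · have hide : i = d := by omega
      simp only [QN, if_pos h]
      have := hconst (d - 1) h
      rw [this]
      have : ((d:ℤ) - 1) + 1 ≤ (i:ℤ) := by omega
      push_cast
      omega
    · simp only [QN, if_neg h]
      have := hS (d - 1) (by omega)
      omega
end

section
variable {d i : ℕ} {S : ℕ → ℤ}

/-- Alternative chain when `S 0 ≥ i + 2`. -/
def QN' (i : ℕ) (S : ℕ → ℤ) : ℕ → ℤ := fun k => if k < i then (k : ℤ) + 2 else S k - 1

lemma QN'_chain (hd : 0 < d) (hi1 : 1 ≤ i) (hid : i ≤ d)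
    (hS : ∀ k, k < d → 0 < S k) (hconst : ∀ k, k < i → S k = S 0)
    (hinc : ∀ k, k + 1 < d → i ≤ k + 1 → S k < S (k + 1))
    (ha : (i : ℤ) + 2 ≤ S 0) : chainN d S (QN' i S) := by
  refine ⟨?_, ?_, ?_⟩
  · simp only [QN', if_pos (show 0 < i from hi1)]; norm_num
  · intro k hk
    by_cases h1 : k + 1 < i
    · have hSk := hconst k (by omega)
      have hSk1 := hconst (k + 1) h1
      simp only [QN', if_pos (show k < i by omega), if_pos h1]
      rw [hSk, hSk1]
      push_cast
      nlinarith [lt_of_lt_of_le (show (0:ℤ) < (i:ℤ) + 2 by positivity) ha]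
    · by_cases h2 : k < i
      · have hk1i : k + 1 = i := by omega
        simp only [QN', if_pos h2, if_neg h1]
        have hSk := hconst k h2
        have hstep := hinc k hk (by omega)
        have hS1 := hS (k + 1) hk
        rw [hSk]
        have hki : (k : ℤ) + 1 = (i : ℤ) := by exact_mod_cast congrArg (Nat.cast : ℕ → ℤ) hk1i
        have h5 : S 0 < S (k + 1) := by rw [← hSk]; exact hstep
        nlinarith [mul_nonneg (show (0:ℤ) ≤ S 0 - (i:ℤ) - 2 by linarith) (show (0:ℤ) ≤ S (k+1) by linarith)]
      · simp only [QN', if_neg h2, if_neg h1]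
        have h5 := hinc k hk (by omega)
        have h3 := hS k (by omega)
        have h4 := hS (k + 1) hk
        nlinarith
  · by_cases h : d - 1 < i
    · have hide : i = d := by omega
      simp only [QN', if_pos h]
      have h1 := hconst (d - 1) h
      rw [h1]
      have : ((d:ℤ) - 1) + 2 ≤ (i:ℤ) + 2 := by omega
      omega
    · simp only [QN', if_neg h]
      have := hS (d - 1) (by omega)
      omega

/-- Alternative chain when convexity `S (k0+1) ≤ 2 S k0` fails. -/
def RN (i : ℕ) (S : ℕ → ℤ) (k0 : ℕ) : ℕ → ℤ :=
  fun k => if k = k0 + 1 then S (k0 + 1) - 2 else QN i S k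

lemma RN_at {i : ℕ} {S : ℕ → ℤ} {k0 : ℕ} : RN i S k0 (k0 + 1) = S (k0 + 1) - 2 := by
  simp [RN]

lemma RN_ne {i : ℕ} {S : ℕ → ℤ} {k0 k : ℕ} (h : k ≠ k0 + 1) : RN i S k0 k = QN i S k := by
  simp [RN, h]

lemma RN_chain (hd : 0 < d) (hi1 : 1 ≤ i) (hid : i ≤ d)
    (hS : ∀ k, k < d → 0 < S k) (hconst : ∀ k, k < i → S k = S 0)
    (hinc : ∀ k, k + 1 < d → i ≤ k + 1 → S k < S (k + 1))
    (ha : S 0 = (i : ℤ) + 1) (k0 : ℕ) (hk0d : k0 + 1 < d) (hk0i : i ≤ k0 + 1)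
    (hviol : 2 * S k0 < S (k0 + 1)) : chainN d S (RN i S k0) := by
  have hqstep := QN_step (S := S) hd hi1 hid hS hconst hinc ha.ge
  refine ⟨?_, ?_, ?_⟩
  · rw [RN_ne (by omega), QN, if_pos (show 0 < i from hi1)]
    norm_num
  · intro k hk
    by_cases hA : k + 1 = k0 + 1
    · have hkk : k = k0 := by omega
      rw [hkk, RN_at, RN_ne (by omega)]
      by_cases h2 : k0 < i
      · -- k0 = i - 1
        have hSk := hconst k0 h2
        have hS1 := hS (k0 + 1) hk0d
        rw [QN, if_pos h2, hSk, ha]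
        have hki : (k0 : ℤ) + 1 = (i : ℤ) := by
          have : k0 + 1 = i := by omega
          exact_mod_cast congrArg (Nat.cast : ℕ → ℤ) this
        have hv : 2 * ((i:ℤ) + 1) < S (k0 + 1) := by rw [← ha, ← hSk]; exact hviol
        nlinarith
      · rw [QN, if_neg h2]
        have h3 := hS k0 (by omega)
        have h4 := hS (k0 + 1) hk0d
        nlinarith
    · by_cases hB : k = k0 + 1
      · subst hB
        rw [RN_at, RN_ne (by omega), QN, if_neg (show ¬ (k0 + 1 + 1 < i) by omega)]
        have h5 := hinc (k0 + 1) hk (by omega)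
        have h3 := hS (k0 + 1) (by omega)
        have h4 := hS (k0 + 1 + 1) hk
        nlinarith
      · rw [RN_ne (show k ≠ k0 + 1 from hB), RN_ne (show k + 1 ≠ k0 + 1 from hA)]
        exact hqstep k hk
  · by_cases h : d - 1 = k0 + 1
    · rw [h, RN_at, ← h]
      have := hS (d - 1) (by omega)
      omega
    · rw [RN_ne h, QN, if_neg (show ¬ (d - 1 < i) by omega)]
      have := hS (d - 1) (by omega)
      omega
end

section
variable {d i : ℕ} {S P : ℕ → ℤ}

lemma forcedN (hd : 0 < d) (hi1 : 1 ≤ i) (hid : i ≤ d)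
    (hS : ∀ k, k < d → 0 < S k) (hconst : ∀ k, k < i → S k = S 0)
    (hinc : ∀ k, k + 1 < d → i ≤ k + 1 → S k < S (k + 1))
    (ha : S 0 = (i : ℤ) + 1)
    (hB : ∀ k, k + 1 < d → i ≤ k + 1 → S (k + 1) ≤ 2 * S k)
    (hP : chainN d S P) : ∀ k, k < d → P k = QN i S k := by
  have hub := upperN hS hP
  have hlb := lowerBlockN hid (hS 0 hd) hconst hP
  obtain ⟨h0, hstep, hlast⟩ := hP
  have hub2 : ∀ m k, k < i → i - 1 - k = m → P k ≤ (k : ℤ) + 1 := by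
    intro m
    induction m with
    | zero =>
      intro k hk hm
      have hki : k = i - 1 := by omega
      have h1 := hub k (by omega)
      rw [hconst k hk, ha] at h1
      omega
    | succ m ih =>
      intro k hk hm
      have hk1 : k + 1 < i := by omega
      have h1 := ih (k + 1) hk1 (by omega)
      have h2 := hstep k (by omega)
      rw [hconst k (by omega), hconst (k + 1) hk1] at h2
      have h3 : P k < P (k + 1) := lt_of_mul_lt_mul_left h2 (hS 0 hd).le
      push_cast at h1 ⊢
      omega
  have hblock : ∀ k, k < i → P k = (k : ℤ) + 1 := fun k hk =>
    le_antisymm (hub2 (i - 1 - k) k hk rfl) (hlb k hk)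
  have htail : ∀ m k, k = i - 1 + m → k < d → P k = S k - 1 := by
    intro m
    induction m with
    | zero =>
      intro k hkeq hkd
      have hki : k < i := by omega
      have h1 := hblock k hki
      rw [hconst k hki, ha]
      omega
    | succ m ih =>
      intro k hkeq hkd
      have hk' : k = (i - 1 + m) + 1 := by omega
      rw [hk']
      set j := i - 1 + m with hj
      have h1 := ih j rfl (by omega)
      have h2 := hstep j (by omega)
      rw [h1] at h2
      have h3 := hB j (by omega) (by omega)
      have h4 := hS j (by omega)
      have h5 := hS (j + 1) (by omega)
      have h6 := hub (j + 1) (by omega)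
      nlinarith
  intro k hkd
  by_cases hk : k < i
  · rw [QN, if_pos hk]; exact hblock k hk
  · rw [QN, if_neg hk]; exact htail (k - (i - 1)) k (by omega) hkd
end

lemma interior_mem_iff {d : ℕ} (hd : 0 < d) (s : Fin d → ℕ) (hpos : ∀ j, 0 < s j)
    (x : Fin d → ℝ) :
    x ∈ interior (lectureHall d s) ↔
      (0 < x ⟨0, hd⟩ ∧
       (∀ j : Fin d, ∀ hj : (j : ℕ) + 1 < d,
          x j * (s ⟨(j : ℕ) + 1, hj⟩ : ℝ) < x ⟨(j : ℕ) + 1, hj⟩ * (s j : ℝ)) ∧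
       x ⟨d - 1, Nat.sub_lt hd Nat.one_pos⟩ < (s ⟨d - 1, Nat.sub_lt hd Nat.one_pos⟩ : ℝ)) := by
  have hsR : ∀ j : Fin d, (0 : ℝ) < (s j : ℝ) := fun j => by exact_mod_cast hpos j
  constructor
  · intro hx
    have hxS : x ∈ lectureHall d s := interior_subset hx
    obtain ⟨ε, hε, hball⟩ := Metric.isOpen_iff.1 isOpen_interior x hx
    have hball' : Metric.ball x ε ⊆ lectureHall d s := fun y hy => interior_subset (hball hy)
    obtain ⟨hA, hB, hC⟩ := hxS
    have hupd : ∀ (j0 : Fin d) (δ : ℝ), |δ| < ε →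
        Function.update x j0 (x j0 + δ) ∈ lectureHall d s := by
      intro j0 δ hδ
      apply hball'
      rw [Metric.mem_ball, dist_pi_lt_iff hε]
      intro b
      rcases eq_or_ne b j0 with rfl | hb
      · simp only [Function.update_self, Real.dist_eq, add_sub_cancel_left]
        exact hδ
      · simp only [Function.update_of_ne hb, dist_self]
        exact hε
    have habs : |(-(ε / 2) : ℝ)| < ε := by rw [abs_neg, abs_of_pos (by linarith)]; linarith
    have habs' : |(ε / 2 : ℝ)| < ε := by rw [abs_of_pos (by linarith)]; linarith
    refine ⟨?_, ?_, ?_⟩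
    · -- strict positivity at 0
      by_contra hcon
      push_neg at hcon
      have h1 := (hupd ⟨0, hd⟩ (-(ε / 2)) habs).1 hd
      rw [Function.update_self] at h1
      have h2 := hA hd
      rw [le_div_iff₀ (hsR ⟨0, hd⟩), zero_mul] at h2
      rw [le_div_iff₀ (hsR ⟨0, hd⟩), zero_mul] at h1
      nlinarith [hsR (⟨0, hd⟩ : Fin d)]
    · intro j hj
      set j1 : Fin d := ⟨(j : ℕ) + 1, hj⟩ with hj1
      have hne : j1 ≠ j := by
        intro h
        have := congrArg Fin.val h
        simp [hj1] at this
      have h1 := (hupd j (ε / 2) habs').2.1 j hj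
      rw [Function.update_self, Function.update_of_ne hne] at h1
      rw [div_le_div_iff₀ (hsR j) (hsR j1)] at h1
      nlinarith [hsR j1]
    · set jl : Fin d := ⟨d - 1, Nat.sub_lt hd Nat.one_pos⟩ with hjl
      have h1 := (hupd jl (ε / 2) habs').2.2 hd
      rw [Function.update_self] at h1
      rw [div_le_one (hsR jl)] at h1
      linarith
  · rintro ⟨h1, h2, h3⟩
    set U : Set (Fin d → ℝ) :=
      ({y | 0 < y ⟨0, hd⟩} ∩
        ⋂ (j : Fin d), ⋂ (hj : (j : ℕ) + 1 < d),
          {y : Fin d → ℝ | y j * (s ⟨(j : ℕ) + 1, hj⟩ : ℝ) < y ⟨(j : ℕ) + 1, hj⟩ * (s j : ℝ)}) ∩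
      {y | y ⟨d - 1, Nat.sub_lt hd Nat.one_pos⟩ < (s ⟨d - 1, Nat.sub_lt hd Nat.one_pos⟩ : ℝ)}
      with hU
    have hUopen : IsOpen U := by
      refine IsOpen.inter (IsOpen.inter ?_ ?_) ?_
      · exact isOpen_lt continuous_const (continuous_apply _)
      · refine isOpen_iInter_of_finite fun j => ?_
        refine isOpen_iInter_of_finite fun hj => ?_
        exact isOpen_lt ((continuous_apply j).mul continuous_const)
          ((continuous_apply _).mul continuous_const)
      · exact isOpen_lt (continuous_apply _) continuous_const
    have hUsub : U ⊆ lectureHall d s := by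
      rintro y ⟨⟨hy1, hy2⟩, hy3⟩
      simp only [Set.mem_iInter, Set.mem_setOf_eq] at hy2
      refine ⟨?_, ?_, ?_⟩
      · intro h
        exact div_nonneg (le_of_lt hy1) (hsR _).le
      · intro j hj
        rw [div_le_div_iff₀ (hsR j) (hsR _)]
        exact (hy2 j hj).le
      · intro h
        rw [div_le_one (hsR _)]
        exact (hy3).le
    have hxU : x ∈ U := by
      refine ⟨⟨h1, ?_⟩, h3⟩
      simp only [Set.mem_iInter, Set.mem_setOf_eq]
      exact h2
    exact interior_maximal hUsub hUopen hxU

lemma bridge {d : ℕ} (hd : 0 < d) (s : Fin d → ℕ) (hpos : ∀ j, 0 < s j) (p : Fin d → ℤ) :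
    (fun j => (p j : ℝ)) ∈ interior (lectureHall d s) ↔
    chainN d (fun k => if h : k < d then (s ⟨k, h⟩ : ℤ) else 1)
             (fun k => if h : k < d then p ⟨k, h⟩ else 1) := by
  rw [interior_mem_iff hd s hpos]
  have hlast : d - 1 < d := Nat.sub_lt hd Nat.one_pos
  constructor
  · rintro ⟨h1, h2, h3⟩
    refine ⟨?_, ?_, ?_⟩
    · simp only [dif_pos hd]
      exact_mod_cast h1
    · intro k hk
      have hkd : k < d := by omega
      simp only [dif_pos hk, dif_pos hkd]
      have h' : ((p ⟨k, hkd⟩ : ℤ) : ℝ) * ((s ⟨k + 1, hk⟩ : ℕ) : ℝ) <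
          ((p ⟨k + 1, hk⟩ : ℤ) : ℝ) * ((s ⟨k, hkd⟩ : ℕ) : ℝ) := h2 ⟨k, hkd⟩ hk
      have h'' : ((s ⟨k + 1, hk⟩ : ℕ) : ℝ) * ((p ⟨k, hkd⟩ : ℤ) : ℝ) <
          ((s ⟨k, hkd⟩ : ℕ) : ℝ) * ((p ⟨k + 1, hk⟩ : ℤ) : ℝ) := by linarith
      exact_mod_cast h''
    · simp only [dif_pos hlast]
      exact_mod_cast h3
  · rintro ⟨h1, h2, h3⟩
    simp only [dif_pos hd, dif_pos hlast] at h1 h3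
    refine ⟨by exact_mod_cast h1, ?_, by exact_mod_cast h3⟩
    intro j hj
    have hjd : (j : ℕ) < d := j.isLt
    have h' := h2 (j : ℕ) hj
    simp only [dif_pos hj, dif_pos hjd] at h'
    have h'' : ((s ⟨(j : ℕ) + 1, hj⟩ : ℕ) : ℝ) * ((p ⟨(j : ℕ), hjd⟩ : ℤ) : ℝ) <
        ((s ⟨(j : ℕ), hjd⟩ : ℕ) : ℝ) * ((p ⟨(j : ℕ) + 1, hj⟩ : ℤ) : ℝ) := by
      exact_mod_cast h'
    have hjj : (⟨(j : ℕ), hjd⟩ : Fin d) = j := rfl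
    rw [hjj] at h''
    linarith

/-- for `s` constant equal on the first `i` entries and strictly
increasing afterwards, the interior of `P_d^(s)` contains exactly one lattice
point iff `s_1 = ⋯ = s_i = i + 1` and `s_{j+1} ≤ 2 s_j` for `j ≥ i`; the unique
interior lattice point is `(1, 2, …, i, s_{i+1} - 1, …, s_d - 1)`. -/
theorem stmt_5 (d i : ℕ) (hd : 0 < d) (hi1 : 1 ≤ i) (hid : i ≤ d)
    (s : Fin d → ℕ) (hpos : ∀ j, 0 < s j)
    (hconst : ∀ j : Fin d, (j : ℕ) < i → s j = s ⟨0, hd⟩)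
    (hinc : ∀ j : Fin d, ∀ hj : (j : ℕ) + 1 < d, i ≤ (j : ℕ) + 1 →
      s j < s ⟨(j : ℕ) + 1, hj⟩) :
    ((∃! p : Fin d → ℤ, (fun j => (p j : ℝ)) ∈ interior (lectureHall d s)) ↔
      ((∀ j : Fin d, (j : ℕ) < i → s j = i + 1) ∧
        ∀ j : Fin d, ∀ hj : (j : ℕ) + 1 < d, i ≤ (j : ℕ) + 1 →
          s ⟨(j : ℕ) + 1, hj⟩ ≤ 2 * s j)) ∧
    (((∀ j : Fin d, (j : ℕ) < i → s j = i + 1) ∧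
        ∀ j : Fin d, ∀ hj : (j : ℕ) + 1 < d, i ≤ (j : ℕ) + 1 →
          s ⟨(j : ℕ) + 1, hj⟩ ≤ 2 * s j) →
      ∀ p : Fin d → ℤ, (fun j => (p j : ℝ)) ∈ interior (lectureHall d s) →
        p = fun j : Fin d => if (j : ℕ) < i then ((j : ℕ) : ℤ) + 1 else (s j : ℤ) - 1) := by
  classical
  set S : ℕ → ℤ := fun k => if h : k < d then (s ⟨k, h⟩ : ℤ) else 1 with hSdef
  have hS : ∀ k, k < d → 0 < S k := by
    intro k hk
    simp only [hSdef, dif_pos hk]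
    exact_mod_cast hpos _
  have hSc : ∀ k (h : k < d), S k = (s ⟨k, h⟩ : ℤ) := by
    intro k h
    simp [hSdef, dif_pos h]
  have hconstS : ∀ k, k < i → S k = S 0 := by
    intro k hk
    have hkd : k < d := by omega
    rw [hSc k hkd, hSc 0 hd]
    exact_mod_cast congrArg (Nat.cast : ℕ → ℤ) (hconst ⟨k, hkd⟩ hk)
  have hincS : ∀ k, k + 1 < d → i ≤ k + 1 → S k < S (k + 1) := by
    intro k hk hik
    rw [hSc k (by omega), hSc (k + 1) hk]
    exact_mod_cast hinc ⟨k, by omega⟩ hk hik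
  have hmem : ∀ p : Fin d → ℤ, ((fun j => (p j : ℝ)) ∈ interior (lectureHall d s) ↔
      chainN d S (fun k => if h : k < d then p ⟨k, h⟩ else 1)) := fun p => bridge hd s hpos p
  have hchain_mem : ∀ F : ℕ → ℤ, chainN d S F →
      (fun j : Fin d => ((F (j : ℕ) : ℤ) : ℝ)) ∈ interior (lectureHall d s) := by
    intro F hF
    apply (hmem (fun j : Fin d => F (j : ℕ))).2
    apply chainN_congr hd ?_ hF
    intro k hk
    simp [dif_pos hk]
  have htq : ∀ j : Fin d, QN i S (j : ℕ) =
      (if (j : ℕ) < i then ((j : ℕ) : ℤ) + 1 else (s j : ℤ) - 1) := by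
    intro j
    by_cases h : (j : ℕ) < i
    · simp [QN, h]
    · simp only [QN, if_neg h]
      rw [hSc _ j.isLt]
  have condS : ((∀ j : Fin d, (j : ℕ) < i → s j = i + 1) ∧
      (∀ j : Fin d, ∀ hj : (j : ℕ) + 1 < d, i ≤ (j : ℕ) + 1 →
        s ⟨(j : ℕ) + 1, hj⟩ ≤ 2 * s j)) →
      (S 0 = (i : ℤ) + 1 ∧ ∀ k, k + 1 < d → i ≤ k + 1 → S (k + 1) ≤ 2 * S k) := by
    rintro ⟨hc1, hc2⟩
    constructor
    · rw [hSc 0 hd]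
      exact_mod_cast congrArg (Nat.cast : ℕ → ℤ) (hc1 ⟨0, hd⟩ hi1)
    · intro k hk hik
      rw [hSc (k + 1) hk, hSc k (by omega)]
      have := hc2 ⟨k, by omega⟩ hk hik
      exact_mod_cast this
  have forced_all : S 0 = (i : ℤ) + 1 →
      (∀ k, k + 1 < d → i ≤ k + 1 → S (k + 1) ≤ 2 * S k) →
      ∀ p : Fin d → ℤ, (fun j => (p j : ℝ)) ∈ interior (lectureHall d s) →
      p = fun j : Fin d => if (j : ℕ) < i then ((j : ℕ) : ℤ) + 1 else (s j : ℤ) - 1 := by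
    intro ha hB p hp
    have hc := (hmem p).1 hp
    have hf := forcedN hd hi1 hid hS hconstS hincS ha hB hc
    funext j
    have h1 := hf (j : ℕ) j.isLt
    simp only [dif_pos j.isLt] at h1
    have h2 : p j = QN i S (j : ℕ) := h1
    rw [h2, htq j]
  refine ⟨⟨?_, ?_⟩, ?_⟩
  · rintro ⟨p, hp, hu⟩
    have hc := (hmem p).1 hp
    have hage : (i : ℤ) + 1 ≤ S 0 := by
      have h1 := lowerBlockN hid (hS 0 hd) hconstS hc (i - 1) (by omega)
      have h2 := upperN hS hc (i - 1) (by omega)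
      rw [hconstS (i - 1) (by omega)] at h2
      omega
    have ha : S 0 = (i : ℤ) + 1 := by
      by_contra hne
      have ha2 : (i : ℤ) + 2 ≤ S 0 := by omega
      have m1 := hchain_mem (QN i S) (QN_chain hd hi1 hid hS hconstS hincS (by omega))
      have m2 := hchain_mem (QN' i S) (QN'_chain hd hi1 hid hS hconstS hincS ha2)
      have e := (hu _ m1).trans (hu _ m2).symm
      have h0 : QN i S 0 = QN' i S 0 := congrFun e ⟨0, hd⟩
      rw [QN, QN', if_pos (show 0 < i from hi1), if_pos (show 0 < i from hi1)] at h0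
      norm_num at h0
    have hB : ∀ k, k + 1 < d → i ≤ k + 1 → S (k + 1) ≤ 2 * S k := by
      intro k hk hik
      by_contra hv
      push_neg at hv
      have m1 := hchain_mem (QN i S) (QN_chain hd hi1 hid hS hconstS hincS ha.ge)
      have m2 := hchain_mem (RN i S k) (RN_chain hd hi1 hid hS hconstS hincS ha k hk hik hv)
      have e := (hu _ m1).trans (hu _ m2).symm
      have h0 : QN i S (k + 1) = RN i S k (k + 1) := congrFun e ⟨k + 1, hk⟩
      rw [RN_at, QN, if_neg (by omega)] at h0
      omega
    constructor
    · intro j hj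
      have h0 : s ⟨0, hd⟩ = i + 1 := by
        have := (hSc 0 hd).symm.trans ha
        exact_mod_cast this
      rw [hconst j hj, h0]
    · intro j hj hij
      have := hB (j : ℕ) hj hij
      rw [hSc ((j : ℕ) + 1) hj, hSc (j : ℕ) j.isLt] at this
      exact_mod_cast this
  · intro hcond
    obtain ⟨ha, hB⟩ := condS hcond
    refine ⟨fun j : Fin d => QN i S (j : ℕ),
      hchain_mem (QN i S) (QN_chain hd hi1 hid hS hconstS hincS ha.ge), ?_⟩
    intro q hq
    rw [forced_all ha hB q hq]
    funext j
    exact (htq j).symm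
  · intro hcond p hp
    obtain ⟨ha, hB⟩ := condS hcond
    exact forced_all ha hB p hp
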